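/- Let D ≤ Σᵢ (pᵢ+qᵢ) denote partial sums where p₁ = q₁ = 1, p_{n+1} = n·Σ_{i=1}^n (pᵢ+qᵢ), and q_{n+1} = n·(Σ_{i=1}^n (pᵢ+qᵢ) + p_{n+1}), and let α = 0^{p₁}1^{q₁}0^{p₂}1^{q₂}⋯. With scaling factors s₀(n) = Σ_{i=1}^n (pᵢ+qᵢ) and s₁(n) = Σ_{i=1}^n (pᵢ+qᵢ) + p_{n+1}: for every n and every position a with 1 < a/s₀(n) < n, the colour α(a) = 0; and for every position a with 1 < a/s₁(n) < n, the colour α(a) = 1. -/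
import Mathlib


open scoped Classical

/-- `S n = ∑_{i=1}^n (pᵢ + qᵢ)`, where `p₁ = q₁ = 1`, `p_{n+1} = n · S n` and
`q_{n+1} = n · (S n + p_{n+1})`; this gives `S (n+1) = S n + n·S n + n·(S n + n·S n)`. -/
def S17 : ℕ → ℕ
  | 0 => 0
  | 1 => 2
  | n + 2 =>
      S17 (n + 1) + (n + 1) * S17 (n + 1) +
        (n + 1) * (S17 (n + 1) + (n + 1) * S17 (n + 1))

/-- `p₁ = 1` and `p_{n+1} = n · S n` for `n ≥ 1`. -/
def p17 (n : ℕ) : ℕ := if n ≤ 1 then 1 else (n - 1) * S17 (n - 1)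

/-- `q₁ = 1` and `q_{n+1} = n · (S n + p_{n+1})` for `n ≥ 1`. -/
def q17 (n : ℕ) : ℕ := if n ≤ 1 then 1 else (n - 1) * (S17 (n - 1) + p17 n)

/-- The string `α = 0^{p₁} 1^{q₁} 0^{p₂} 1^{q₂} ⋯`: position `a` is coloured `0` iff
it lies in the `0`-part `[S (n-1), S (n-1) + pₙ)` of some block pair `n ≥ 1`. -/
noncomputable def alpha17 : ℕ → Fin 2 := fun a =>
  if ∃ n ≤ a + 1, 1 ≤ n ∧ S17 (n - 1) ≤ a ∧ a < S17 (n - 1) + p17 n then 0 else 1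


lemma p17_succ (n : ℕ) (hn : 1 ≤ n) : p17 (n + 1) = n * S17 n := by
  have : ¬ (n + 1 ≤ 1) := by omega
  simp [p17, this]

lemma q17_succ (n : ℕ) (hn : 1 ≤ n) : q17 (n + 1) = n * (S17 n + p17 (n + 1)) := by
  have : ¬ (n + 1 ≤ 1) := by omega
  simp [q17, this]

lemma S17_succ (k : ℕ) : S17 (k + 1) = S17 k + p17 (k + 1) + q17 (k + 1) := by
  cases k with
  | zero => simp [S17, p17, q17]
  | succ m =>
    rw [p17_succ _ (by omega), q17_succ _ (by omega), p17_succ _ (by omega)]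
    show S17 (m + 2) = _
    rw [S17]

lemma S17_mono : Monotone S17 := by
  apply monotone_nat_of_le_succ
  intro k
  rw [S17_succ]; omega

lemma S17_ge (n : ℕ) (hn : 1 ≤ n) : n ≤ S17 n := by
  induction n with
  | zero => omega
  | succ m ih =>
    rcases Nat.eq_or_lt_of_le hn with h | h
    · simp [← h]; rw [show (1:ℕ) = 0 + 1 from rfl, S17_succ]; simp [S17, p17, q17]
    · have hm : 1 ≤ m := by omega
      have := ih hm
      rw [S17_succ, q17_succ _ hm, p17_succ _ hm]
      have h1 : 1 ≤ S17 m := le_trans hm this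
      have h2 : m * 1 ≤ m * S17 m := Nat.mul_le_mul_left m h1
      omega

/-- With the scaling factors `s₀ n = S n` and `s₁ n = S n + p_{n+1}`: every position
`a` with `1 < a / s₀ n < n` is coloured `0`, and every position `a` with
`1 < a / s₁ n < n` is coloured `1`. -/
theorem alpha17_colours (n : ℕ) (hn : 1 ≤ n) (a : ℕ) :
    (S17 n < a → a < n * S17 n → alpha17 a = 0) ∧
    (S17 n + p17 (n + 1) < a → a < n * (S17 n + p17 (n + 1)) → alpha17 a = 1) := by
  have hp := p17_succ n hn
  have hq := q17_succ n hn
  have hSn := S17_ge n hn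
  constructor
  · intro h1 h2
    have hex : ∃ m ≤ a + 1, 1 ≤ m ∧ S17 (m - 1) ≤ a ∧ a < S17 (m - 1) + p17 m := by
      refine ⟨n + 1, by omega, by omega, ?_, ?_⟩
      · simpa using h1.le
      · simpa [hp] using by nlinarith
    simp only [alpha17, if_pos hex]
  · intro h1 h2
    have hnex : ¬ ∃ m ≤ a + 1, 1 ≤ m ∧ S17 (m - 1) ≤ a ∧ a < S17 (m - 1) + p17 m := by
      rintro ⟨m, hma, hm1, hle, hlt⟩
      have hstep : S17 (m - 1) + p17 m ≤ S17 m := by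
        have := S17_succ (m - 1)
        have hm : m - 1 + 1 = m := by omega
        rw [hm] at this
        omega
      rcases lt_trichotomy m (n + 1) with h | h | h
      · have := S17_mono (show m ≤ n by omega)
        omega
      · subst h; simp at hlt; omega
      · have hS1 : S17 (n + 1) = S17 n + p17 (n + 1) + n * (S17 n + p17 (n + 1)) := by
          rw [S17_succ, hq]
        have : S17 (n + 1) ≤ S17 (m - 1) := S17_mono (by omega)
        omega
    simp only [alpha17, if_neg hnex]
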